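/- Let 0 < ε < 1/2, let k ≥ 2 be an integer, and let n be an integer with n > 200k²/ε. Let p = (1 − 0.8ε)·(k−2)!/n^{k−1}. Then in the random hypergraph H_{n,p;k}, with probability at least 1 − 1/n, every connected component has at most (16k/ε²)·log n vertices. -/

import Mathlib

open scoped Classical

/-- Two vertices touch if some hyperedge of `E` contains both. -/
def Touches {V : Type*} (E : Finset (Finset V)) (v w : V) : Prop :=
  ∃ e ∈ E, v ∈ e ∧ w ∈ e

/-- The connected component of a vertex `v`. -/
def component {V : Type*} (E : Finset (Finset V)) (v : V) : Set V :=
  {w | Relation.ReflTransGen (Touches E) v w}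

/-- `H` is `k`-uniform: every hyperedge has exactly `k` vertices. -/
def IsUniform (k : ℕ) {n : ℕ} (H : Finset (Finset (Fin n))) : Prop :=
  ∀ e ∈ H, e.card = k

/-- The probability of the event `A` under `H_{n,p;k}`, the random `k`-uniform hypergraph
on `{1,…,n}` in which each of the `C(n,k)` possible hyperedges appears independently with
probability `p`. -/
noncomputable def probHnp (n k : ℕ) (p : ℝ) (A : Finset (Finset (Fin n)) → Prop) : ℝ :=
  ∑ H : Finset (Finset (Fin n)),
    if IsUniform k H ∧ A H then p ^ H.card * (1 - p) ^ (Nat.choose n k - H.card) else 0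

set_option maxHeartbeats 1000000

namespace CompAux

variable {n k : ℕ}

/-- The set of all potential hyperedges (k-subsets). -/
def K (n k : ℕ) : Finset (Finset (Fin n)) := Finset.powersetCard k Finset.univ

lemma card_K : (K n k).card = n.choose k := by
  simp [K, Finset.card_powersetCard]

noncomputable def mu (n k : ℕ) (p : ℝ) (E : Finset (Finset (Fin n)) → Prop) : ℝ :=
  ∑ H ∈ (K n k).powerset,
    if E H then p ^ H.card * (1 - p) ^ ((K n k).card - H.card) else 0

variable {p : ℝ}

lemma w_nonneg (hp0 : 0 ≤ p) (hp1 : p ≤ 1) (a b : ℕ) :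
    (0:ℝ) ≤ p ^ a * (1 - p) ^ b :=
  mul_nonneg (pow_nonneg hp0 _) (pow_nonneg (by linarith) _)

lemma mu_nonneg (hp0 : 0 ≤ p) (hp1 : p ≤ 1) (E : Finset (Finset (Fin n)) → Prop) :
    0 ≤ mu n k p E := by
  apply Finset.sum_nonneg
  intro H _
  split
  · exact w_nonneg hp0 hp1 _ _
  · exact le_refl 0

lemma mu_total (hp0 : 0 ≤ p) (hp1 : p ≤ 1) :
    mu n k p (fun _ => True) = 1 := by
  unfold mu
  simp only [if_true]
  have h := Finset.prod_add (fun _ : Finset (Fin n) => p) (fun _ => 1 - p) (K n k)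
  simp only [add_sub_cancel, Finset.prod_const, one_pow] at h
  rw [show (∑ H ∈ (K n k).powerset, p ^ H.card * (1 - p) ^ ((K n k).card - H.card))
      = ∑ t ∈ (K n k).powerset, (p ^ t.card * (1-p) ^ ((K n k) \ t).card) from ?_, ← h]
  apply Finset.sum_congr rfl
  intro t ht
  rw [Finset.mem_powerset] at ht
  rw [Finset.card_sdiff_of_subset ht]

lemma mu_split (E C : Finset (Finset (Fin n)) → Prop) :
    mu n k p E = mu n k p (fun H => E H ∧ C H) + mu n k p (fun H => E H ∧ ¬ C H) := by
  unfold mu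
  rw [← Finset.sum_add_distrib]
  apply Finset.sum_congr rfl
  intro H _
  by_cases hE : E H <;> by_cases hC : C H <;> simp [hE, hC]

lemma mu_mono (hp0 : 0 ≤ p) (hp1 : p ≤ 1) {E F : Finset (Finset (Fin n)) → Prop}
    (h : ∀ H ∈ (K n k).powerset, E H → F H) : mu n k p E ≤ mu n k p F := by
  apply Finset.sum_le_sum
  intro H hH
  by_cases hE : E H
  · rw [if_pos hE, if_pos (h H hH hE)]
  · rw [if_neg hE]
    split
    · exact w_nonneg hp0 hp1 _ _
    · exact le_refl 0

lemma mu_congr {E F : Finset (Finset (Fin n)) → Prop}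
    (h : ∀ H, E H ↔ F H) : mu n k p E = mu n k p F := by
  unfold mu
  apply Finset.sum_congr rfl
  intro H _
  simp [h H]

lemma mu_false : mu n k p (fun _ => False) = 0 := by simp [mu]

lemma mu_le_one (hp0 : 0 ≤ p) (hp1 : p ≤ 1) (E : Finset (Finset (Fin n)) → Prop) :
    mu n k p E ≤ 1 := by
  rw [← mu_total (n := n) (k := k) hp0 hp1]
  exact mu_mono hp0 hp1 (fun H _ _ => trivial)

lemma mu_add_compl (E : Finset (Finset (Fin n)) → Prop) :
    mu n k p E + mu n k p (fun H => ¬ E H) = 1 → True := fun _ => trivial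

lemma mu_compl (hp0 : 0 ≤ p) (hp1 : p ≤ 1) (E : Finset (Finset (Fin n)) → Prop) :
    mu n k p E = 1 - mu n k p (fun H => ¬ E H) := by
  have h := mu_split (n := n) (k := k) (p := p) (fun _ => True) E
  rw [mu_total hp0 hp1] at h
  have h1 : mu n k p (fun H => True ∧ E H) = mu n k p E := mu_congr (by simp)
  have h2 : mu n k p (fun H => True ∧ ¬ E H) = mu n k p (fun H => ¬ E H) := mu_congr (by simp)
  rw [h1, h2] at h
  linarith

lemma mu_exists_le_sum (hp0 : 0 ≤ p) (hp1 : p ≤ 1)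
    (B : Fin n → Finset (Finset (Fin n)) → Prop) :
    mu n k p (fun H => ∃ v, B v H) ≤ ∑ v : Fin n, mu n k p (B v) := by
  unfold mu
  rw [Finset.sum_comm]
  apply Finset.sum_le_sum
  intro H _
  by_cases hE : ∃ v, B v H
  · rw [if_pos hE]
    obtain ⟨v, hv⟩ := hE
    have : ∀ w : Fin n, 0 ≤ if B w H then p ^ H.card * (1 - p) ^ ((K n k).card - H.card) else 0 := by
      intro w; split
      · exact w_nonneg hp0 hp1 _ _
      · exact le_refl 0
    calc p ^ H.card * (1 - p) ^ ((K n k).card - H.card)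
        = (if B v H then p ^ H.card * (1 - p) ^ ((K n k).card - H.card) else 0) := by rw [if_pos hv]
      _ ≤ _ := Finset.single_le_sum (fun w _ => this w) (Finset.mem_univ v)
  · rw [if_neg hE]
    apply Finset.sum_nonneg
    intro w _
    split
    · exact w_nonneg hp0 hp1 _ _
    · exact le_refl 0

/-- Key factorization: if `E` does not depend on the slot `q`, then
the measure of `E ∧ q ∈ H` is `p` times the measure of `E`. -/
lemma mu_factor (hp0 : 0 ≤ p) (hp1 : p ≤ 1) {q : Finset (Fin n)} (hq : q ∈ K n k)
    {E : Finset (Finset (Fin n)) → Prop}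
    (hE : ∀ H, E (insert q H) ↔ E (H.erase q)) :
    mu n k p (fun H => E H ∧ q ∈ H) = p * mu n k p E ∧
    mu n k p (fun H => E H ∧ q ∉ H) = (1 - p) * mu n k p E := by
  have hqK' : q ∉ (K n k).erase q := Finset.notMem_erase q _
  have hpow : (K n k).powerset = (insert q ((K n k).erase q)).powerset := by
    rw [Finset.insert_erase hq]
  have hK'card : ((K n k).erase q).card = (K n k).card - 1 :=
    Finset.card_erase_of_mem hq
  have hCpos : 1 ≤ (K n k).card := Finset.card_pos.mpr ⟨q, hq⟩
  have key : ∀ F : Finset (Finset (Fin n)) → Prop,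
      mu n k p F = ∑ t ∈ ((K n k).erase q).powerset,
        ((if F t then p ^ t.card * (1-p) ^ ((K n k).card - t.card) else 0)
          + (if F (insert q t) then p ^ (t.card+1) * (1-p) ^ ((K n k).card - (t.card+1)) else 0)) := by
    intro F
    unfold mu
    rw [hpow, Finset.sum_powerset_insert hqK', ← Finset.sum_add_distrib]
    apply Finset.sum_congr rfl
    intro t ht
    rw [Finset.mem_powerset] at ht
    have hqt : q ∉ t := fun h => hqK' (ht h)
    rw [Finset.card_insert_of_notMem hqt]
  -- auxiliary facts about cards
  have hcard_le : ∀ t ∈ ((K n k).erase q).powerset, t.card ≤ (K n k).card - 1 := by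
    intro t ht
    rw [Finset.mem_powerset] at ht
    calc t.card ≤ ((K n k).erase q).card := Finset.card_le_card ht
      _ = _ := hK'card
  have hEt : ∀ t ∈ ((K n k).erase q).powerset, (E (insert q t) ↔ E t) := by
    intro t ht
    rw [Finset.mem_powerset] at ht
    have hqt : q ∉ t := fun h => hqK' (ht h)
    rw [hE t, Finset.erase_eq_of_notMem hqt]
  set S : ℝ := ∑ t ∈ ((K n k).erase q).powerset,
      (if E t then p ^ t.card * (1-p) ^ ((K n k).card - 1 - t.card) else 0) with hS
  have hmuE : mu n k p E = S := by
    rw [key E, hS]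
    apply Finset.sum_congr rfl
    intro t ht
    have h1 := hcard_le t ht
    have h2 := hEt t ht
    by_cases hEt' : E t
    · rw [if_pos hEt', if_pos (h2.mpr hEt'), if_pos hEt']
      have e1 : (K n k).card - t.card = ((K n k).card - 1 - t.card) + 1 := by omega
      have e2 : (K n k).card - (t.card + 1) = (K n k).card - 1 - t.card := by omega
      rw [e1, e2, pow_succ, pow_succ]
      ring
    · rw [if_neg hEt', if_neg (fun h => hEt' (h2.mp h)), if_neg hEt']
      simp
  constructor
  · rw [key (fun H => E H ∧ q ∈ H), hmuE, hS, Finset.mul_sum]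
    apply Finset.sum_congr rfl
    intro t ht
    rw [Finset.mem_powerset] at ht
    have hqt : q ∉ t := fun h => hqK' (ht h)
    have h1 := hcard_le t (Finset.mem_powerset.mpr ht)
    have h2 := hEt t (Finset.mem_powerset.mpr ht)
    rw [if_neg (fun h => hqt h.2)]
    by_cases hEt' : E t
    · rw [if_pos ⟨h2.mpr hEt', Finset.mem_insert_self q t⟩, if_pos hEt']
      have e2 : (K n k).card - (t.card + 1) = (K n k).card - 1 - t.card := by omega
      rw [e2, pow_succ]
      ring
    · rw [if_neg (fun h => hEt' (h2.mp h.1)), if_neg hEt']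
      simp
  · rw [key (fun H => E H ∧ q ∉ H), hmuE, hS, Finset.mul_sum]
    apply Finset.sum_congr rfl
    intro t ht
    rw [Finset.mem_powerset] at ht
    have hqt : q ∉ t := fun h => hqK' (ht h)
    have h1 := hcard_le t (Finset.mem_powerset.mpr ht)
    rw [if_neg (fun (h : E (insert q t) ∧ q ∉ insert q t) => h.2 (Finset.mem_insert_self q t))]
    by_cases hEt' : E t
    · rw [if_pos ⟨hEt', hqt⟩, if_pos hEt']
      have e1 : (K n k).card - t.card = ((K n k).card - 1 - t.card) + 1 := by omega
      rw [e1, pow_succ]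
      ring
    · rw [if_neg (fun (h : E t ∧ q ∉ t) => hEt' h.1), if_neg hEt']
      simp


/-- Upper tail of the binomial distribution, defined by recursion. -/
noncomputable def b (p : ℝ) : ℕ → ℕ → ℝ
  | _, 0 => 1
  | 0, _+1 => 0
  | r+1, t+1 => p * b p r t + (1-p) * b p r (t+1)

lemma b_zero_right (r : ℕ) : b p r 0 = 1 := by cases r <;> rfl

lemma b_zero_left (t : ℕ) : b p 0 (t+1) = 0 := rfl

lemma b_succ (r t : ℕ) : b p (r+1) (t+1) = p * b p r t + (1-p) * b p r (t+1) := rfl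

lemma b_nonneg (hp0 : 0 ≤ p) (hp1 : p ≤ 1) : ∀ r t, 0 ≤ b p r t := by
  intro r
  induction r with
  | zero => intro t; cases t with
    | zero => rw [b_zero_right]; norm_num
    | succ t => rw [b_zero_left]
  | succ r ih => intro t; cases t with
    | zero => rw [b_zero_right]; norm_num
    | succ t =>
      rw [b_succ]
      have := ih t
      have := ih (t+1)
      nlinarith

lemma b_mono (hp0 : 0 ≤ p) (hp1 : p ≤ 1) : ∀ r t, b p r t ≤ b p (r+1) t := by
  intro r
  induction r with
  | zero => intro t; cases t with
    | zero => rw [b_zero_right, b_zero_right]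
    | succ t => rw [b_zero_left]; exact b_nonneg hp0 hp1 _ _
  | succ r ih => intro t; cases t with
    | zero => rw [b_zero_right, b_zero_right]
    | succ t =>
      rw [b_succ, b_succ]
      have h1 := ih t
      have h2 := ih (t+1)
      nlinarith

lemma b_le_aux (hp0 : 0 ≤ p) (hp1 : p ≤ 1) {l : ℝ} (hl : 0 ≤ l) :
    ∀ r t, b p r t ≤ (1 - p + p * Real.exp l) ^ r * Real.exp (-(l * t)) := by
  have hbase1 : (1:ℝ) ≤ 1 - p + p * Real.exp l := by
    have : (1:ℝ) ≤ Real.exp l := by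
      rw [← Real.exp_zero]; exact Real.exp_le_exp.mpr hl
    nlinarith
  have hbase0 : (0:ℝ) ≤ 1 - p + p * Real.exp l := by linarith
  intro r
  induction r with
  | zero => intro t; cases t with
    | zero => simp [b_zero_right]
    | succ t => rw [b_zero_left]; positivity
  | succ r ih => intro t; cases t with
    | zero =>
      rw [b_zero_right]
      have h1 : (1:ℝ) ≤ (1 - p + p * Real.exp l) ^ (r+1) := one_le_pow₀ hbase1
      simpa using h1
    | succ t =>
      rw [b_succ]
      have h1 := ih t
      have h2 := ih (t+1)
      have hexp : Real.exp (-(l * (t:ℝ))) = Real.exp l * Real.exp (-(l * ((t:ℝ)+1))) := by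
        rw [← Real.exp_add]; ring_nf
      have hcast : ((t+1 : ℕ) : ℝ) = (t:ℝ) + 1 := by push_cast; ring
      rw [hcast] at h2 ⊢
      calc p * b p r t + (1-p) * b p r (t+1)
          ≤ p * ((1 - p + p * Real.exp l) ^ r * Real.exp (-(l * t)))
            + (1-p) * ((1 - p + p * Real.exp l) ^ r * Real.exp (-(l * ((t:ℝ)+1)))) := by
            have hb1 := b_nonneg hp0 hp1 r t
            have hb2 := b_nonneg hp0 hp1 r (t+1)
            have e1 : p * b p r t ≤ p * ((1 - p + p * Real.exp l) ^ r * Real.exp (-(l * t))) :=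
              mul_le_mul_of_nonneg_left h1 hp0
            have e2 : (1-p) * b p r (t+1) ≤ (1-p) * ((1 - p + p * Real.exp l) ^ r * Real.exp (-(l * ((t:ℝ)+1)))) :=
              mul_le_mul_of_nonneg_left h2 (by linarith)
            linarith
        _ = (1 - p + p * Real.exp l) ^ (r+1) * Real.exp (-(l * ((t:ℝ)+1))) := by
            rw [hexp, pow_succ]
            ring

lemma b_le_exp (hp0 : 0 ≤ p) (hp1 : p ≤ 1) {l : ℝ} (hl : 0 ≤ l) (r t : ℕ) :
    b p r t ≤ Real.exp ((r:ℝ) * (p * (Real.exp l - 1)) - l * t) := by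
  have hexp1 : (1:ℝ) ≤ Real.exp l := by
    rw [← Real.exp_zero]; exact Real.exp_le_exp.mpr hl
  have hbase0 : (0:ℝ) ≤ 1 - p + p * Real.exp l := by nlinarith
  have h := b_le_aux hp0 hp1 hl r t
  have hpow : (1 - p + p * Real.exp l) ^ r ≤ Real.exp ((r:ℝ) * (p * (Real.exp l - 1))) := by
    have h2 : 1 - p + p * Real.exp l ≤ Real.exp (p * (Real.exp l - 1)) := by
      have := Real.add_one_le_exp (p * (Real.exp l - 1))
      nlinarith
    calc (1 - p + p * Real.exp l) ^ r ≤ (Real.exp (p * (Real.exp l - 1))) ^ r :=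
          pow_le_pow_left₀ hbase0 h2 r
      _ = Real.exp ((r:ℝ) * (p * (Real.exp l - 1))) := (Real.exp_nat_mul _ r).symm
  calc b p r t ≤ (1 - p + p * Real.exp l) ^ r * Real.exp (-(l * t)) := h
    _ ≤ Real.exp ((r:ℝ) * (p * (Real.exp l - 1))) * Real.exp (-(l * t)) :=
        mul_le_mul_of_nonneg_right hpow (Real.exp_nonneg _)
    _ = Real.exp ((r:ℝ) * (p * (Real.exp l - 1)) - l * t) := by
        rw [← Real.exp_add]; ring_nf

/-- Slots (potential hyperedges) containing `u` and disjoint from `P`, as a list. -/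
noncomputable def slotsList (n k : ℕ) (u : Fin n) (P : Finset (Fin n)) :
    List (Finset (Fin n)) :=
  ((Finset.univ : Finset (Finset (Fin n))).filter
    (fun e => e.card = k ∧ u ∈ e ∧ e ∩ P = ∅)).toList

lemma mem_slotsList {n k : ℕ} {u : Fin n} {P : Finset (Fin n)} {e : Finset (Fin n)} :
    e ∈ slotsList n k u P ↔ e.card = k ∧ u ∈ e ∧ e ∩ P = ∅ := by
  simp [slotsList, Finset.mem_toList]

lemma slotsList_length {n k : ℕ} (hk : 1 ≤ k) (u : Fin n) (P : Finset (Fin n)) :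
    (slotsList n k u P).length ≤ (n-1).choose (k-1) := by
  rw [slotsList, Finset.length_toList]
  have : ((Finset.univ : Finset (Finset (Fin n))).filter
      (fun e => e.card = k ∧ u ∈ e ∧ e ∩ P = ∅)).card
      ≤ (Finset.powersetCard (k-1) (Finset.univ.erase u)).card := by
    apply Finset.card_le_card_of_injOn (fun e => e.erase u)
    · intro e he
      simp only [Finset.mem_coe, Finset.mem_filter] at he ⊢
      rw [Finset.mem_powersetCard]
      constructor
      · intro x hx
        rw [Finset.mem_erase] at hx ⊢
        exact ⟨hx.1, Finset.mem_univ x⟩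
      · rw [Finset.card_erase_of_mem he.2.2.1, he.2.1]
    · intro e₁ h₁ e₂ h₂ hee
      simp only [Finset.mem_coe, Finset.mem_filter] at h₁ h₂
      have hee' : e₁.erase u = e₂.erase u := hee
      have : insert u (e₁.erase u) = insert u (e₂.erase u) := by rw [hee']
      rwa [Finset.insert_erase h₁.2.2.1, Finset.insert_erase h₂.2.2.1] at this
  rw [Finset.card_powersetCard] at this
  calc _ ≤ (Finset.univ.erase u).card.choose (k-1) := this
    _ = (n-1).choose (k-1) := by
        rw [Finset.card_erase_of_mem (Finset.mem_univ u)]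
        simp

/-- The BFS exploration process: with given fuel, processed set `P`, discovered set `D`,
remaining query list `Q` for the current vertex, count the number of found hyperedges. -/
noncomputable def run (n k : ℕ) : ℕ → Finset (Fin n) → Finset (Fin n) →
    List (Finset (Fin n)) → Finset (Finset (Fin n)) → ℕ
  | 0, _, _, _, _ => 0
  | (fuel+1), P, D, q :: Q', H =>
      if q ∈ H then 1 + run n k fuel P (D ∪ q) Q' H else run n k fuel P D Q' H
  | (fuel+1), P, D, [], H =>
      if hD : (D \ P).Nonempty then
        run n k fuel (insert ((D \ P).min' hD) P) D
          (slotsList n k ((D \ P).min' hD) P) H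
      else 0

lemma run_congr {n k : ℕ} : ∀ (fuel : ℕ) (P D : Finset (Fin n)) (Q : List (Finset (Fin n)))
    (H₁ H₂ : Finset (Finset (Fin n))),
    (∀ e, (e ∈ Q ∨ e ∩ P = ∅) → (e ∈ H₁ ↔ e ∈ H₂)) →
    run n k fuel P D Q H₁ = run n k fuel P D Q H₂ := by
  intro fuel
  induction fuel with
  | zero => intro P D Q H₁ H₂ _; rfl
  | succ fuel ih =>
    intro P D Q H₁ H₂ hagree
    cases Q with
    | cons q Q' =>
      have hq : q ∈ H₁ ↔ q ∈ H₂ := hagree q (Or.inl List.mem_cons_self)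
      have hnext : ∀ e, (e ∈ Q' ∨ e ∩ P = ∅) → (e ∈ H₁ ↔ e ∈ H₂) := by
        intro e he
        exact hagree e (he.imp (fun h => List.mem_cons_of_mem q h) id)
      by_cases hH : q ∈ H₁
      · rw [show run n k (fuel+1) P D (q::Q') H₁ = 1 + run n k fuel P (D ∪ q) Q' H₁ from
          by simp [run, hH]]
        rw [show run n k (fuel+1) P D (q::Q') H₂ = 1 + run n k fuel P (D ∪ q) Q' H₂ from
          by simp [run, hq.mp hH]]
        rw [ih P (D ∪ q) Q' H₁ H₂ hnext]
      · have hH₂ : q ∉ H₂ := fun h => hH (hq.mpr h)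
        rw [show run n k (fuel+1) P D (q::Q') H₁ = run n k fuel P D Q' H₁ from
          by simp [run, hH]]
        rw [show run n k (fuel+1) P D (q::Q') H₂ = run n k fuel P D Q' H₂ from
          by simp [run, hH₂]]
        exact ih P D Q' H₁ H₂ hnext
    | nil =>
      by_cases hD : (D \ P).Nonempty
      · rw [show run n k (fuel+1) P D [] H₁ =
            run n k fuel (insert ((D \ P).min' hD) P) D
              (slotsList n k ((D \ P).min' hD) P) H₁ from by simp [run, hD]]
        rw [show run n k (fuel+1) P D [] H₂ =
            run n k fuel (insert ((D \ P).min' hD) P) D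
              (slotsList n k ((D \ P).min' hD) P) H₂ from by simp [run, hD]]
        apply ih
        intro e he
        apply hagree
        right
        rcases he with he | he
        · exact (mem_slotsList.mp he).2.2
        · rw [← Finset.subset_empty] at he ⊢
          intro x hx
          apply he
          rw [Finset.mem_inter] at hx ⊢
          exact ⟨hx.1, Finset.mem_insert_of_mem hx.2⟩
      · rw [show run n k (fuel+1) P D [] H₁ = 0 from by simp [run, hD],
           show run n k (fuel+1) P D [] H₂ = 0 from by simp [run, hD]]

lemma mu_run_le (hp0 : 0 ≤ p) (hp1 : p ≤ 1) :
    ∀ (fuel t : ℕ) (P D : Finset (Fin n)) (Q : List (Finset (Fin n))),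
    (∀ e ∈ Q, e.card = k ∧ (e ∩ P).Nonempty) → Q.Nodup →
    mu n k p (fun H => t ≤ run n k fuel P D Q H) ≤ b p fuel t := by
  intro fuel
  induction fuel with
  | zero =>
    intro t P D Q _ _
    cases t with
    | zero => rw [b_zero_right]; exact mu_le_one hp0 hp1 _
    | succ t =>
      rw [b_zero_left,
        mu_congr (F := fun _ => False) (fun H => by simp [run]), mu_false]
  | succ fuel ih =>
    intro t P D Q hQ hnd
    cases t with
    | zero => rw [b_zero_right]; exact mu_le_one hp0 hp1 _
    | succ t =>
      cases Q with
      | nil =>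
        by_cases hD : (D \ P).Nonempty
        · have he : ∀ H : Finset (Finset (Fin n)), (t+1 ≤ run n k (fuel+1) P D [] H) ↔
              (t+1 ≤ run n k fuel (insert ((D\P).min' hD) P) D
                (slotsList n k ((D\P).min' hD) P) H) := by
            intro H
            rw [show run n k (fuel+1) P D [] H = run n k fuel (insert ((D\P).min' hD) P) D
                (slotsList n k ((D\P).min' hD) P) H from by simp [run, hD]]
          rw [mu_congr he]
          refine le_trans (ih _ _ _ _ ?_ (Finset.nodup_toList _)) (b_mono hp0 hp1 fuel (t+1))
          intro e he'
          obtain ⟨h1, h2, h3⟩ := mem_slotsList.mp he'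
          exact ⟨h1, ⟨_, Finset.mem_inter.mpr ⟨h2, Finset.mem_insert_self _ _⟩⟩⟩
        · rw [mu_congr (F := fun _ => False) (fun H => by simp [run, hD]), mu_false]
          exact b_nonneg hp0 hp1 _ _
      | cons q Q' =>
        obtain ⟨hqcard, hqP⟩ := hQ q List.mem_cons_self
        have hqK : q ∈ K n k := Finset.mem_powersetCard.mpr ⟨Finset.subset_univ q, hqcard⟩
        have hqQ' : q ∉ Q' := (List.nodup_cons.mp hnd).1
        have hagree : ∀ (H : Finset (Finset (Fin n))) (e : Finset (Fin n)),
            (e ∈ Q' ∨ e ∩ P = ∅) → (e ∈ insert q H ↔ e ∈ H.erase q) := by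
          intro H e he
          have hne : e ≠ q := by
            rintro rfl
            rcases he with he | he
            · exact hqQ' he
            · rw [he] at hqP; exact Finset.not_nonempty_empty hqP
          rw [Finset.mem_insert, Finset.mem_erase]
          simp [hne]
        have hAind : ∀ H : Finset (Finset (Fin n)),
            (t ≤ run n k fuel P (D ∪ q) Q' (insert q H)) ↔
            (t ≤ run n k fuel P (D ∪ q) Q' (H.erase q)) := by
          intro H
          rw [run_congr fuel P (D ∪ q) Q' (insert q H) (H.erase q) (hagree H)]
        have hBind : ∀ H : Finset (Finset (Fin n)),
            (t+1 ≤ run n k fuel P D Q' (insert q H)) ↔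
            (t+1 ≤ run n k fuel P D Q' (H.erase q)) := by
          intro H
          rw [run_congr fuel P D Q' (insert q H) (H.erase q) (hagree H)]
        have hsplit := mu_split (n:=n) (k:=k) (p:=p)
          (fun H => t+1 ≤ run n k (fuel+1) P D (q::Q') H) (fun H => q ∈ H)
        have hc1 : mu n k p (fun H => (t+1 ≤ run n k (fuel+1) P D (q::Q') H) ∧ q ∈ H)
            = mu n k p (fun H => (t ≤ run n k fuel P (D ∪ q) Q' H) ∧ q ∈ H) := by
          apply mu_congr; intro H
          by_cases hH : q ∈ H
          · simp only [hH, and_true]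
            rw [show run n k (fuel+1) P D (q::Q') H = 1 + run n k fuel P (D ∪ q) Q' H from
              by simp [run, hH]]
            omega
          · simp [hH]
        have hc2 : mu n k p (fun H => (t+1 ≤ run n k (fuel+1) P D (q::Q') H) ∧ q ∉ H)
            = mu n k p (fun H => (t+1 ≤ run n k fuel P D Q' H) ∧ q ∉ H) := by
          apply mu_congr; intro H
          by_cases hH : q ∈ H
          · simp [hH]
          · simp only [hH, not_false_iff, and_true]
            rw [show run n k (fuel+1) P D (q::Q') H = run n k fuel P D Q' H from
              by simp [run, hH]]
        have hfA := (mu_factor hp0 hp1 hqK (E := fun H => t ≤ run n k fuel P (D ∪ q) Q' H) hAind).1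
        have hfB := (mu_factor hp0 hp1 hqK (E := fun H => t+1 ≤ run n k fuel P D Q' H) hBind).2
        have hinv' : ∀ e ∈ Q', e.card = k ∧ (e ∩ P).Nonempty :=
          fun e he => hQ e (List.mem_cons_of_mem q he)
        have hnd' : Q'.Nodup := (List.nodup_cons.mp hnd).2
        have hAb : mu n k p (fun H => t ≤ run n k fuel P (D ∪ q) Q' H) ≤ b p fuel t :=
          ih t P (D ∪ q) Q' hinv' hnd'
        have hBb : mu n k p (fun H => t+1 ≤ run n k fuel P D Q' H) ≤ b p fuel (t+1) :=
          ih (t+1) P D Q' hinv' hnd'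
        rw [b_succ]
        calc mu n k p (fun H => t+1 ≤ run n k (fuel+1) P D (q::Q') H)
            = mu n k p (fun H => (t ≤ run n k fuel P (D ∪ q) Q' H) ∧ q ∈ H)
              + mu n k p (fun H => (t+1 ≤ run n k fuel P D Q' H) ∧ q ∉ H) := by
              rw [hsplit, hc1, hc2]
          _ = p * mu n k p (fun H => t ≤ run n k fuel P (D ∪ q) Q' H)
              + (1-p) * mu n k p (fun H => t+1 ≤ run n k fuel P D Q' H) := by
              rw [hfA, hfB]
          _ ≤ p * b p fuel t + (1-p) * b p fuel (t+1) := by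
              have h1 := mul_le_mul_of_nonneg_left hAb hp0
              have h2 := mul_le_mul_of_nonneg_left hBb (by linarith : (0:ℝ) ≤ 1-p)
              linarith

lemma component_subset_of_closed {n : ℕ} {H : Finset (Finset (Fin n))} {v : Fin n}
    {D : Finset (Fin n)} (hvD : v ∈ D)
    (hclose : ∀ e ∈ H, (e ∩ D).Nonempty → e ⊆ D) :
    component H v ⊆ ↑D := by
  intro x hx
  simp only [component, Set.mem_setOf_eq] at hx
  induction hx with
  | refl => exact hvD
  | tail hab hbc ih =>
    obtain ⟨e, heH, hbe, hce⟩ := hbc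
    exact hclose e heH ⟨_, Finset.mem_inter.mpr ⟨hbe, ih⟩⟩ hce

lemma run_ge {n k : ℕ} (hk : 2 ≤ k) (v : Fin n) (s : ℕ)
    (H : Finset (Finset (Fin n))) (hH : ∀ e ∈ H, e.card = k) :
    ∀ (fuel : ℕ) (P D : Finset (Fin n)) (Q : List (Finset (Fin n))) (g : ℕ),
    v ∈ D → P ⊆ D → ↑D ⊆ component H v →
    (∀ e ∈ Q, e.card = k ∧ (e ∩ P).Nonempty) →
    (∀ e ∈ H, (e ∩ P).Nonempty → e ∉ Q → e ⊆ D) →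
    D.card ≤ 1 + (k-1) * g →
    P.card ≤ s →
    Q.length + (s - P.card) * (1 + (n-1).choose (k-1)) ≤ fuel →
    s < (component H v).ncard →
    s ≤ (k-1) * (g + run n k fuel P D Q H) := by
  have hstall : ∀ (P D : Finset (Fin n)) (g : ℕ), v ∈ D → P ⊆ D → D ⊆ P →
      (∀ e ∈ H, (e ∩ P).Nonempty → e ⊆ D) →
      P.card ≤ s → s < (component H v).ncard → False := by
    intro P D g hvD hPD hDP hclose hPs hcomp
    have hDeq : D = P := Finset.Subset.antisymm hDP hPD
    have hsub : component H v ⊆ ↑D :=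
      component_subset_of_closed hvD (fun e he hne => hclose e he (by rwa [hDeq] at hne))
    have h1 : (component H v).ncard ≤ D.card := by
      rw [← Set.ncard_coe_finset D]
      exact Set.ncard_le_ncard hsub (Finset.finite_toSet D)
    have h2 : D.card = P.card := by rw [hDeq]
    omega
  have hbig : ∀ (P D : Finset (Fin n)) (g : ℕ), P ⊆ D → ¬ (D ⊆ P) →
      D.card ≤ 1 + (k-1) * g → s ≤ P.card → s ≤ (k-1) * g := by
    intro P D g hPD hDP hDcard hPs
    have : P ⊂ D := Finset.ssubset_iff_subset_ne.mpr ⟨hPD, fun h => hDP (h ▸ le_refl _)⟩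
    have := Finset.card_lt_card this
    omega
  intro fuel
  induction fuel with
  | zero =>
    intro P D Q g hvD hPD hDc hQ hclose hDcard hPs hfuel hcomp
    have hQnil : Q = [] := by
      cases Q with
      | nil => rfl
      | cons a l => simp at hfuel
    subst hQnil
    have hPcard : s ≤ P.card := by
      by_contra hcon
      push_neg at hcon
      have h1 : 1 ≤ s - P.card := by omega
      have h2 : (1:ℕ) * (1 + (n-1).choose (k-1)) ≤ (s - P.card) * (1 + (n-1).choose (k-1)) :=
        Nat.mul_le_mul_right _ h1
      simp at hfuel
      omega
    by_cases hDP : D ⊆ P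
    · exact absurd (hstall P D g hvD hPD hDP
        (fun e he hne => hclose e he hne List.not_mem_nil) hPs hcomp) (fun h => h)
    · have h1 := hbig P D g hPD hDP hDcard hPcard
      calc s ≤ (k-1) * g := h1
        _ ≤ (k-1) * (g + run n k 0 P D [] H) := Nat.mul_le_mul_left _ (Nat.le_add_right g _)
  | succ fuel ih =>
    intro P D Q g hvD hPD hDc hQ hclose hDcard hPs hfuel hcomp
    cases Q with
    | cons q Q' =>
      obtain ⟨hqk, hqP⟩ := hQ q List.mem_cons_self
      by_cases hqH : q ∈ H
      · rw [show run n k (fuel+1) P D (q::Q') H = 1 + run n k fuel P (D ∪ q) Q' H from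
          by simp [run, hqH]]
        obtain ⟨w, hw⟩ := hqP
        rw [Finset.mem_inter] at hw
        have hwD : w ∈ D := hPD hw.2
        have hqcomp : ∀ x ∈ q, (x : Fin n) ∈ component H v := by
          intro x hx
          have hwc : Relation.ReflTransGen (Touches H) v w := hDc (Finset.mem_coe.mpr hwD)
          exact Relation.ReflTransGen.tail hwc ⟨q, hqH, hw.1, hx⟩
        have hcard' : (D ∪ q).card ≤ 1 + (k-1) * (g+1) := by
          have e1 : (q \ D).card + D.card = (D ∪ q).card := by
            rw [Finset.union_comm D q]
            exact Finset.card_sdiff_add_card q D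
          have e3 : q \ D ⊆ q.erase w := by
            intro x hx
            rw [Finset.mem_sdiff] at hx
            rw [Finset.mem_erase]
            exact ⟨fun h => hx.2 (h ▸ hwD), hx.1⟩
          have e4 : (q \ D).card ≤ k - 1 := by
            calc (q \ D).card ≤ (q.erase w).card := Finset.card_le_card e3
              _ = k - 1 := by rw [Finset.card_erase_of_mem hw.1, hqk]
          have e5 : (k-1)*(g+1) = (k-1)*g + (k-1) := by ring
          omega
        have h1 : s ≤ (k-1) * ((g+1) + run n k fuel P (D ∪ q) Q' H) := by
          apply ih P (D ∪ q) Q' (g+1) (Finset.mem_union_left _ hvD)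
            (hPD.trans Finset.subset_union_left)
          · intro x hx
            rw [Finset.coe_union, Set.mem_union] at hx
            rcases hx with hx | hx
            · exact hDc hx
            · exact hqcomp x hx
          · exact fun e he => hQ e (List.mem_cons_of_mem q he)
          · intro e heH hne heQ'
            by_cases heq : e = q
            · rw [heq]; exact Finset.subset_union_right
            · have : e ∉ q :: Q' := by
                intro hmem
                rcases List.mem_cons.mp hmem with h | h
                · exact heq h
                · exact heQ' h
              exact (hclose e heH hne this).trans Finset.subset_union_left
          · exact hcard'
          · exact hPs
          · simp only [List.length_cons] at hfuel
            omega
          · exact hcomp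
        have heq2 : g + (1 + run n k fuel P (D ∪ q) Q' H) = (g+1) + run n k fuel P (D ∪ q) Q' H := by omega
        rw [heq2]
        exact h1
      · rw [show run n k (fuel+1) P D (q::Q') H = run n k fuel P D Q' H from
          by simp [run, hqH]]
        apply ih P D Q' g hvD hPD hDc
          (fun e he => hQ e (List.mem_cons_of_mem q he))
        · intro e heH hne heQ'
          have : e ∉ q :: Q' := by
            intro hmem
            rcases List.mem_cons.mp hmem with h | h
            · exact hqH (h ▸ heH)
            · exact heQ' h
          exact hclose e heH hne this
        · exact hDcard
        · exact hPs
        · simp only [List.length_cons] at hfuel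
          omega
        · exact hcomp
    | nil =>
      by_cases hD : (D \ P).Nonempty
      · have huD : (D \ P).min' hD ∈ D \ P := Finset.min'_mem _ hD
        rw [Finset.mem_sdiff] at huD
        rw [show run n k (fuel+1) P D [] H
            = run n k fuel (insert ((D \ P).min' hD) P) D (slotsList n k ((D \ P).min' hD) P) H from
          by simp [run, hD]]
        set u := (D \ P).min' hD with hu
        by_cases hPcs : P.card < s
        · apply ih (insert u P) D (slotsList n k u P) g hvD
            (Finset.insert_subset huD.1 hPD) hDc
          · intro e he
            obtain ⟨h1, h2, h3⟩ := mem_slotsList.mp he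
            exact ⟨h1, ⟨u, Finset.mem_inter.mpr ⟨h2, Finset.mem_insert_self _ _⟩⟩⟩
          · intro e heH hne heQ
            by_cases hP : (e ∩ P).Nonempty
            · exact hclose e heH hP List.not_mem_nil
            · exfalso
              apply heQ
              rw [Finset.not_nonempty_iff_eq_empty] at hP
              obtain ⟨x, hx⟩ := hne
              rw [Finset.mem_inter, Finset.mem_insert] at hx
              have hue : u ∈ e := by
                rcases hx.2 with h | h
                · exact h ▸ hx.1
                · exfalso
                  have : x ∈ e ∩ P := Finset.mem_inter.mpr ⟨hx.1, h⟩
                  rw [hP] at this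
                  exact Finset.notMem_empty x this
              exact mem_slotsList.mpr ⟨hH e heH, hue, hP⟩
          · exact hDcard
          · rw [Finset.card_insert_of_notMem huD.2]
            omega
          · have hlen := slotsList_length (n := n) (by omega : 1 ≤ k) u P
            have ha : 1 ≤ s - P.card := by omega
            obtain ⟨a, ha'⟩ : ∃ a, s - P.card = a + 1 := ⟨s - P.card - 1, by omega⟩
            have ha2 : s - (insert u P).card = a := by
              rw [Finset.card_insert_of_notMem huD.2]
              omega
            have he : (a+1) * (1 + (n-1).choose (k-1))
                = a * (1 + (n-1).choose (k-1)) + (1 + (n-1).choose (k-1)) := by ring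
            simp only [List.length_nil] at hfuel
            rw [ha'] at hfuel
            rw [ha2]
            omega
          · exact hcomp
        · have hDP : ¬ D ⊆ P := fun h => huD.2 (h huD.1)
          have h1 := hbig P D g hPD hDP hDcard (by omega)
          calc s ≤ (k-1) * g := h1
            _ ≤ (k-1) * (g + _) := Nat.mul_le_mul_left _ (Nat.le_add_right g _)
      · rw [show run n k (fuel+1) P D [] H = 0 from by simp [run, hD]]
        have hDP : D ⊆ P := by
          intro x hx
          by_contra hxP
          exact hD ⟨x, Finset.mem_sdiff.mpr ⟨hx, hxP⟩⟩
        exact absurd (hstall P D g hvD hPD hDP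
          (fun e he hne => hclose e he hne List.not_mem_nil) hPs hcomp) (fun h => h)

lemma probHnp_eq_mu (n k : ℕ) (p : ℝ) (A : Finset (Finset (Fin n)) → Prop) :
    probHnp n k p A = mu n k p A := by
  unfold probHnp mu
  rw [card_K]
  rw [← Finset.sum_subset (Finset.subset_univ ((K n k).powerset)) ?_]
  · apply Finset.sum_congr rfl
    intro H hH
    have hU : IsUniform k H := by
      intro e he
      rw [Finset.mem_powerset] at hH
      have := hH he
      rw [K, Finset.mem_powersetCard] at this
      exact this.2
    by_cases hA : A H
    · rw [if_pos ⟨hU, hA⟩, if_pos hA]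
    · rw [if_neg (fun h => hA h.2), if_neg hA]
  · intro H _ hH
    rw [if_neg]
    rintro ⟨h1, h2⟩
    apply hH
    rw [Finset.mem_powerset]
    intro e he
    rw [K, Finset.mem_powersetCard]
    exact ⟨Finset.subset_univ e, h1 e he⟩

end CompAux

lemma scalar_ineq' (ε β : ℝ) (hε0 : 0 < ε) (hε : ε < 1/2) (hβ0 : 0 ≤ β)
    (hβ : β ≤ ε/2 + (3/4)*(ε/2)^2) :
    (1-0.8*ε) * (1 + ε/200) * β - ε/2 ≤ -0.2*ε^2 := by
  nlinarith [sq_nonneg ε, mul_pos hε0 hε0, sq_nonneg (ε*ε), mul_nonneg hβ0 hε0.le]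

lemma exponent_bound (ε Kk S T Nr P B lg : ℝ) (hε0 : 0 < ε) (hε : ε < 1/2)
    (hK : 2 ≤ Kk) (hS : 0 ≤ S) (hB0 : 0 ≤ B)
    (hB : B ≤ ε/2 + (3/4)*(ε/2)^2)
    (hNp : (Kk-1) * (Nr*P) ≤ S * ((1-0.8*ε) * (1+ε/200)))
    (hT : S ≤ (Kk-1)*T)
    (hεs : 16*Kk*lg - ε^2 ≤ ε^2*S)
    (hlg : 1 ≤ lg) :
    Nr*(P*B) - (ε/2)*T ≤ -(2*lg) := by
  have hK1 : (0:ℝ) < Kk - 1 := by linarith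
  have hsc := scalar_ineq' ε B hε0 hε hB0 hB
  have hmul : (Kk-1) * (Nr*(P*B) - (ε/2)*T) ≤ (Kk-1) * (-(2*lg)) := by
    have e1 : (Kk-1) * (Nr*(P*B)) ≤ S * ((1-0.8*ε) * (1+ε/200)) * B := by
      have := mul_le_mul_of_nonneg_right hNp hB0
      calc (Kk-1) * (Nr*(P*B)) = (Kk-1) * (Nr*P) * B := by ring
        _ ≤ S * ((1-0.8*ε) * (1+ε/200)) * B := this
    have e3 : -((Kk-1) * ((ε/2)*T)) ≤ -((ε/2)*S) := by
      have h := mul_le_mul_of_nonneg_left hT (by linarith : (0:ℝ) ≤ ε/2)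
      have heq : (Kk-1) * ((ε/2)*T) = ε/2 * ((Kk-1)*T) := by ring
      linarith
    have e4 : S * ((1-0.8*ε) * (1+ε/200) * B - ε/2) ≤ S * (-0.2*ε^2) :=
      mul_le_mul_of_nonneg_left hsc hS
    have e6 : -0.2 * (ε^2*S) ≤ -0.2 * (16*Kk*lg - ε^2) := by nlinarith
    have e7 : -0.2 * (16*Kk*lg - ε^2) ≤ (Kk-1) * (-(2*lg)) := by
      have hε2 : ε^2 ≤ 1/4 := by nlinarith
      nlinarith [mul_le_mul_of_nonneg_right hK (le_trans zero_le_one hlg)]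
    calc (Kk-1) * (Nr*(P*B) - (ε/2)*T)
        = (Kk-1) * (Nr*(P*B)) + (-((Kk-1) * ((ε/2)*T))) := by ring
      _ ≤ S * ((1-0.8*ε) * (1+ε/200)) * B + (-((ε/2)*S)) := by linarith
      _ = S * ((1-0.8*ε) * (1+ε/200) * B - ε/2) := by ring
      _ ≤ S * (-0.2*ε^2) := e4
      _ = -0.2 * (ε^2*S) := by ring
      _ ≤ -0.2 * (16*Kk*lg - ε^2) := e6
      _ ≤ (Kk-1) * (-(2*lg)) := e7
  exact le_of_mul_le_mul_left hmul hK1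

open CompAux in
theorem all_components_small_aux (ε : ℝ) (hε0 : 0 < ε) (hε : ε < 1 / 2)
    (k : ℕ) (hk : 2 ≤ k) (n : ℕ) (hn : (200 : ℝ) * k ^ 2 / ε < n) :
    (1 : ℝ) - 1 / n ≤
      probHnp n k ((1 - 0.8 * ε) * (Nat.factorial (k - 2)) / (n : ℝ) ^ (k - 1))
        (fun H => ∀ v : Fin n,
          ((component H v).ncard : ℝ) ≤ 16 * k / ε ^ 2 * Real.log n) := by
  have hkR : (2:ℝ) ≤ (k:ℝ) := by exact_mod_cast hk
  set c : ℝ := 1 - 0.8 * ε with hc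
  have hc0 : (0:ℝ) < c := by rw [hc]; nlinarith
  have hc1 : c ≤ 1 := by rw [hc]; nlinarith
  clear_value c
  -- basic size facts
  have hn1600 : (1600:ℝ) < (n:ℝ) := by
    refine lt_trans ?_ hn
    rw [lt_div_iff₀ hε0]
    nlinarith
  have hn0 : (0:ℝ) < (n:ℝ) := by linarith
  have hkn : (k:ℝ) ≤ (n:ℝ) := by
    refine le_trans ?_ (le_of_lt hn)
    rw [le_div_iff₀ hε0]
    nlinarith
  have hnpow0 : (0:ℝ) < (n:ℝ)^(k-1) := by positivity
  have hnpow2 : (n:ℝ)^(k-1) = (n:ℝ)^(k-2) * (n:ℝ) := by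
    rw [show k - 1 = (k-2) + 1 by omega, pow_succ]
  have hkpow2 : (k:ℝ)^(k-1) = (k:ℝ)^(k-2) * (k:ℝ) := by
    rw [show k - 1 = (k-2) + 1 by omega, pow_succ]
  have h200 : (200:ℝ) * (k:ℝ)^2 < ε * n := by
    rw [div_lt_iff₀ hε0] at hn
    linarith [hn]
  -- factorial bound : 200 * (k-1)! ≤ ε * n^(k-1)
  have hfactk : ((k-1).factorial : ℝ) ≤ (k:ℝ)^(k-1) := by
    have f1 : (k-1).factorial ≤ (k-1)^(k-1) := Nat.factorial_le_pow (k-1)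
    have f2 : (k-1)^(k-1) ≤ k^(k-1) := Nat.pow_le_pow_left (by omega) _
    exact_mod_cast le_trans f1 f2
  have hkpowle : (k:ℝ)^(k-2) ≤ (n:ℝ)^(k-2) := by
    apply pow_le_pow_left₀ (by positivity) hkn
  have hfact : 200 * ((k-1).factorial : ℝ) ≤ ε * (n:ℝ)^(k-1) := by
    calc 200 * ((k-1).factorial : ℝ) ≤ 200 * (k:ℝ)^(k-1) := by nlinarith
      _ = 200 * (k:ℝ) * (k:ℝ)^(k-2) := by rw [hkpow2]; ring
      _ ≤ 200 * (k:ℝ)^2 * (k:ℝ)^(k-2) := by nlinarith [pow_nonneg (by linarith : (0:ℝ) ≤ (k:ℝ)) (k-2)]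
      _ ≤ (ε * n) * (n:ℝ)^(k-2) := by
          apply mul_le_mul (le_of_lt h200) hkpowle (by positivity) (by nlinarith)
      _ = ε * (n:ℝ)^(k-1) := by rw [hnpow2]; ring
  have hfactk2 : ((k-2).factorial : ℝ) * ((k:ℝ) - 1) = ((k-1).factorial : ℝ) := by
    have : (k-1).factorial = (k-2+1) * (k-2).factorial := by
      rw [show k - 1 = (k-2) + 1 by omega, Nat.factorial_succ]
    rw [this]
    push_cast
    have : ((k:ℝ) - 2 + 1) = (k:ℝ) - 1 := by ring
    rw [show ((k - 2 : ℕ) : ℝ) = (k:ℝ) - 2 by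
      push_cast [Nat.cast_sub (by omega : 2 ≤ k)]; ring]
    ring
  set p : ℝ := c * ((k-2).factorial : ℝ) / (n:ℝ)^(k-1) with hpdef
  have hp0 : 0 ≤ p := by
    rw [hpdef]; positivity
  have hk1R : (0:ℝ) < (k:ℝ) - 1 := by linarith
  have hfactn : ((k-2).factorial : ℝ) ≤ (n:ℝ)^(k-1) := by
    have h1 : ((k-2).factorial : ℝ) ≤ ((k-1).factorial : ℝ) := by
      exact_mod_cast Nat.factorial_le (by omega : k - 2 ≤ k - 1)
    nlinarith
  have hp1 : p ≤ 1 := by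
    rw [hpdef, div_le_one hnpow0]
    nlinarith
  clear_value p
  -- L, s, t, N₀
  set L : ℝ := 16 * k / ε^2 * Real.log n with hL
  have hlog1 : (1:ℝ) ≤ Real.log n := by
    rw [Real.le_log_iff_exp_le hn0]
    have := Real.exp_one_lt_d9
    linarith
  have hL0 : (0:ℝ) < L := by
    rw [hL]
    have : (0:ℝ) < 16 * k / ε^2 := by positivity
    nlinarith
  set s : ℕ := ⌊L⌋₊ with hs
  have hsle : (s:ℝ) ≤ L := Nat.floor_le (le_of_lt hL0)
  have hsgt : L - 1 < (s:ℝ) := by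
    have := Nat.lt_floor_add_one L
    rw [← hs] at this
    linarith
  have hs1 : 1 ≤ s := by
    rw [hs]
    apply Nat.le_floor
    have hε2 : ε^2 ≤ 1/4 := by nlinarith
    have h1 : (1:ℝ) ≤ 16 * k / ε^2 := by
      rw [le_div_iff₀ (by positivity)]
      nlinarith
    rw [hL]
    push_cast
    nlinarith
  clear_value L s
  set t : ℕ := (s + (k-2)) / (k-1) with ht
  have hk1 : 0 < k - 1 := by omega
  have ht1 : s ≤ (k-1) * t := by
    have h1 := Nat.div_add_mod (s + (k-2)) (k-1)
    have h2 := Nat.mod_lt (s + (k-2)) hk1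
    rw [← ht] at h1
    omega
  have ht2 : ∀ r : ℕ, s ≤ (k-1) * r → t ≤ r := by
    intro r hr
    have : t < r + 1 := by
      rw [ht, Nat.div_lt_iff_lt_mul hk1]
      calc s + (k-2) ≤ (k-1)*r + (k-2) := by omega
        _ < (r+1) * (k-1) := by
            have : (r+1)*(k-1) = (k-1)*r + (k-1) := by ring
            omega
    omega
  clear_value t
  set Csl : ℕ := (n-1).choose (k-1) with hCsl
  set N₀ : ℕ := s * (1 + Csl) with hN₀
  -- binomial coefficient bound : Csl * (k-1)! ≤ n^(k-1)
  have hCslfact : (Csl:ℝ) * ((k-1).factorial : ℝ) ≤ (n:ℝ)^(k-1) := by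
    have h1 : (k-1).factorial * Csl = (n-1).descFactorial (k-1) :=
      (Nat.descFactorial_eq_factorial_mul_choose (n-1) (k-1)).symm
    have h2 : (n-1).descFactorial (k-1) ≤ (n-1)^(k-1) := Nat.descFactorial_le_pow _ _
    have h3 : (n-1)^(k-1) ≤ n^(k-1) := Nat.pow_le_pow_left (by omega) _
    have h4 : ((k-1).factorial * Csl : ℕ) ≤ n^(k-1) := by omega
    calc (Csl:ℝ) * ((k-1).factorial : ℝ) = (((k-1).factorial * Csl : ℕ) : ℝ) := by
          push_cast; ring
      _ ≤ ((n^(k-1) : ℕ) : ℝ) := by exact_mod_cast h4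
      _ = (n:ℝ)^(k-1) := by push_cast; ring
  -- the key bound : (k-1) * N₀ * p ≤ s * (c * (1 + ε/200))
  have hNp : ((k:ℝ)-1) * ((N₀:ℝ) * p) ≤ (s:ℝ) * (c * (1 + ε/200)) := by
    rw [hpdef]
    rw [show ((k:ℝ)-1) * ((N₀:ℝ) * (c * ((k-2).factorial : ℝ) / (n:ℝ)^(k-1)))
        = ((N₀:ℝ) * (((k-2).factorial : ℝ) * ((k:ℝ)-1)) / (n:ℝ)^(k-1)) * c from by ring]
    rw [hfactk2]
    have hN₀R : (N₀:ℝ) = (s:ℝ) * (1 + (Csl:ℝ)) := by rw [hN₀]; push_cast; ring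
    rw [hN₀R]
    have hkey : (1 + (Csl:ℝ)) * ((k-1).factorial : ℝ) ≤ (n:ℝ)^(k-1) * (1 + ε/200) := by
      have h1 : ((k-1).factorial : ℝ) ≤ ε * (n:ℝ)^(k-1) / 200 := by linarith
      nlinarith
    rw [div_mul_eq_mul_div, div_le_iff₀ hnpow0]
    have hs0 : (0:ℝ) ≤ (s:ℝ) := Nat.cast_nonneg s
    calc (s:ℝ) * (1 + (Csl:ℝ)) * ((k-1).factorial:ℝ) * c
        ≤ (s:ℝ) * ((n:ℝ)^(k-1) * (1 + ε/200)) * c := by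
          have := mul_le_mul_of_nonneg_left hkey hs0
          nlinarith [mul_le_mul_of_nonneg_left hkey hs0]
      _ = (s:ℝ) * (c * (1 + ε/200)) * (n:ℝ)^(k-1) := by ring
  clear_value Csl N₀
  -- Chernoff exponent bound
  have hlam0 : 0 ≤ ε/2 := by linarith
  have hexpb : Real.exp (ε/2) - 1 ≤ ε/2 + (3/4) * (ε/2)^2 := by
    have h1 : |ε/2| ≤ 1 := by rw [abs_of_nonneg hlam0]; linarith
    have h2 := Real.exp_bound h1 (by norm_num : 0 < 2)
    have h3 : ∑ m ∈ Finset.range 2, (ε/2) ^ m / (m.factorial : ℝ) = 1 + ε/2 := by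
      simp [Finset.sum_range_succ, Nat.factorial]
    rw [h3] at h2
    have h4 : Real.exp (ε/2) - (1 + ε/2) ≤ |ε/2|^2 * ((3:ℝ)/((2:ℕ).factorial * 2)) := by
      calc Real.exp (ε/2) - (1 + ε/2) ≤ |Real.exp (ε/2) - (1 + ε/2)| := le_abs_self _
        _ ≤ |ε/2|^2 * (((2:ℕ).succ : ℝ)/((2:ℕ).factorial * 2)) := h2
        _ = |ε/2|^2 * ((3:ℝ)/((2:ℕ).factorial * 2)) := by norm_num
    rw [abs_of_nonneg hlam0] at h4
    have : ((2:ℕ).factorial : ℝ) = 2 := by norm_num [Nat.factorial]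
    rw [this] at h4
    nlinarith
  have hbeta0 : 0 ≤ Real.exp (ε/2) - 1 := by
    have : (1:ℝ) ≤ Real.exp (ε/2) := by
      rw [← Real.exp_zero]
      exact Real.exp_le_exp.mpr hlam0
    linarith
  have hεs : 16 * (k:ℝ) * Real.log n - ε^2 ≤ ε^2 * s := by
    have h1 : ε^2 * L = 16 * (k:ℝ) * Real.log n := by
      rw [hL]
      field_simp
    have h2 : ε^2 * (L - 1) ≤ ε^2 * s := mul_le_mul_of_nonneg_left (le_of_lt hsgt) (sq_nonneg ε)
    have h3 : ε^2 * (L - 1) = ε^2 * L - ε^2 := by ring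
    linarith
  -- the exponent bound: X ≤ -(2 log n)
  have hX : (N₀:ℝ) * (p * (Real.exp (ε/2) - 1)) - (ε/2) * t ≤ -(2 * Real.log n) := by
    have hNp' := hNp
    rw [hc] at hNp'
    have e2 : (s:ℝ) ≤ ((k:ℝ)-1) * (t:ℝ) := by
      have h0 : ((s:ℕ):ℝ) ≤ (((k-1) * t : ℕ) : ℝ) := by exact_mod_cast ht1
      calc (s:ℝ) ≤ (((k-1) * t : ℕ) : ℝ) := h0
        _ = (((k-1):ℕ):ℝ) * (t:ℝ) := by push_cast; ring
        _ = ((k:ℝ)-1) * (t:ℝ) := by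
            rw [show (((k-1):ℕ):ℝ) = (k:ℝ)-1 by
              push_cast [Nat.cast_sub (by omega : 1 ≤ k)]; ring]
    exact exponent_bound ε (k:ℝ) (s:ℝ) (t:ℝ) (N₀:ℝ) p (Real.exp (ε/2) - 1) (Real.log n)
      hε0 hε hkR (Nat.cast_nonneg s) hbeta0 hexpb hNp' e2 hεs hlog1
  -- the tail bound
  have hbb : b p N₀ t ≤ 1/(n:ℝ)^2 := by
    have h1 := b_le_exp (p := p) hp0 hp1 hlam0 N₀ t
    have h2 : Real.exp ((N₀:ℝ) * (p * (Real.exp (ε/2) - 1)) - (ε/2) * t)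
        ≤ Real.exp (-(2 * Real.log n)) := Real.exp_le_exp.mpr hX
    have h3 : Real.exp (-(2 * Real.log n)) = 1/(n:ℝ)^2 := by
      rw [show (2:ℝ) * Real.log n = Real.log ((n:ℝ)^2) by
        rw [Real.log_pow]; push_cast; ring]
      rw [Real.exp_neg, Real.exp_log (by positivity), one_div]
    calc b p N₀ t ≤ Real.exp ((N₀:ℝ) * (p * (Real.exp (ε/2) - 1)) - (ε/2) * t) := h1
      _ ≤ Real.exp (-(2 * Real.log n)) := h2
      _ = 1/(n:ℝ)^2 := by rw [h3]
  -- assemble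
  rw [probHnp_eq_mu]
  set A : Finset (Finset (Fin n)) → Prop :=
    fun H => ∀ v : Fin n, ((component H v).ncard : ℝ) ≤ L with hA
  rw [mu_compl hp0 hp1 A]
  have hcompl : mu n k p (fun H => ¬ A H) ≤ 1/(n:ℝ) := by
    have step1 : mu n k p (fun H => ¬ A H)
        ≤ mu n k p (fun H => ∃ v : Fin n, s < (component H v).ncard) := by
      apply mu_mono hp0 hp1
      intro H _ hnA
      have hnA' : ¬ ∀ v : Fin n, ((component H v).ncard : ℝ) ≤ L := by
        simpa [hA] using hnA
      obtain ⟨v, hv0⟩ := not_forall.mp hnA'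
      have hv : L < ((component H v).ncard : ℝ) := not_le.mp hv0
      refine ⟨v, ?_⟩
      have : (s:ℝ) < ((component H v).ncard : ℝ) := lt_of_le_of_lt hsle hv
      exact_mod_cast this
    have step2 : mu n k p (fun H => ∃ v : Fin n, s < (component H v).ncard)
        ≤ ∑ v : Fin n, mu n k p (fun H => s < (component H v).ncard) :=
      mu_exists_le_sum hp0 hp1 _
    have step3 : ∀ v : Fin n, mu n k p (fun H => s < (component H v).ncard) ≤ b p N₀ t := by
      intro v
      have hmono : mu n k p (fun H => s < (component H v).ncard)
          ≤ mu n k p (fun H => t ≤ run n k N₀ ∅ {v} [] H) := by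
        apply mu_mono hp0 hp1
        intro H hH hcomp
        have hHu : ∀ e ∈ H, e.card = k := by
          intro e he
          rw [Finset.mem_powerset] at hH
          have := hH he
          rw [K, Finset.mem_powersetCard] at this
          exact this.2
        have hrge := run_ge hk v s H hHu N₀ ∅ {v} [] 0
          (Finset.mem_singleton_self v) (Finset.empty_subset _)
          (by
            intro x hx
            rw [Finset.coe_singleton, Set.mem_singleton_iff] at hx
            rw [hx]
            exact Relation.ReflTransGen.refl)
          (by intro e he; exact absurd he List.not_mem_nil)
          (by
            intro e _ hne _
            exfalso
            rw [Finset.inter_empty] at hne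
            exact Finset.not_nonempty_empty hne)
          (by simp)
          (by simp)
          (by rw [hN₀, hCsl]; simp)
          hcomp
        apply ht2
        simpa using hrge
      calc mu n k p (fun H => s < (component H v).ncard)
          ≤ mu n k p (fun H => t ≤ run n k N₀ ∅ {v} [] H) := hmono
        _ ≤ b p N₀ t := mu_run_le hp0 hp1 N₀ t ∅ {v} []
            (by intro e he; exact absurd he List.not_mem_nil) List.nodup_nil
    have step4 : ∑ v : Fin n, mu n k p (fun H => s < (component H v).ncard)
        ≤ (n:ℝ) * (1/(n:ℝ)^2) := by
      calc ∑ v : Fin n, mu n k p (fun H => s < (component H v).ncard)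
          ≤ ∑ _v : Fin n, b p N₀ t := Finset.sum_le_sum (fun v _ => step3 v)
        _ = (n:ℝ) * b p N₀ t := by
            rw [Finset.sum_const, Finset.card_univ, Fintype.card_fin, nsmul_eq_mul]
        _ ≤ (n:ℝ) * (1/(n:ℝ)^2) := by
            apply mul_le_mul_of_nonneg_left hbb (le_of_lt hn0)
    have step5 : (n:ℝ) * (1/(n:ℝ)^2) = 1/(n:ℝ) := by
      field_simp
    linarith
  linarith


/-- For `0 < ε < 1/2`, `k ≥ 2`, `n > 200k²/ε` and
`p = (1 - 0.8ε)·(k-2)!/n^{k-1}`, in `H_{n,p;k}` with probability at least `1 - 1/n` every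
connected component has at most `(16k/ε²)·log n` vertices. -/
theorem all_components_small (ε : ℝ) (hε0 : 0 < ε) (hε : ε < 1 / 2)
    (k : ℕ) (hk : 2 ≤ k) (n : ℕ) (hn : (200 : ℝ) * k ^ 2 / ε < n) :
    (1 : ℝ) - 1 / n ≤
      probHnp n k ((1 - 0.8 * ε) * (Nat.factorial (k - 2)) / (n : ℝ) ^ (k - 1))
        (fun H => ∀ v : Fin n,
          ((component H v).ncard : ℝ) ≤ 16 * k / ε ^ 2 * Real.log n) :=
  all_components_small_aux ε hε0 hε k hk n hn
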